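/- A poset (O, ≤) is an ordinal system relative to a universe 𝒰 if and only if (O1) holds (for every nonempty X ⊆ O, X^↧ ∈ P_𝒰(O)) together with: (O2a) for all X ∈ P_𝒰(O) the join ⋁X exists, and (O2b) x⁺ exists for each x ∈ O. -/

import Mathlib

namespace Paper

/-- The union `⋃_{i ∈ I} f(i)` of the values of `f` on elements of `I`. -/
noncomputable def unionImage (f : ZFSet → ZFSet) (I : ZFSet) : ZFSet :=
  ZFSet.sUnion (@ZFSet.image f (Classical.allZFSetDefinable _) I)

/-- A universe: a transitive set closed under pairing and under unions of
`𝒰`-indexed families of elements of `𝒰`. -/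
def IsUniverse (U : ZFSet) : Prop :=
  U.IsTransitive ∧
  (∀ x ∈ U, ∀ y ∈ U, ({x, y} : ZFSet) ∈ U) ∧
  (∀ I ∈ U, ∀ f : ZFSet → ZFSet, (∀ i ∈ I, f i ∈ U) → unionImage f I ∈ U)

variable {X : Type*}

/-- `A ∈ P_𝒰(X)`: the subset `A` of the type `X` is in bijection with some element of `𝒰`. -/
def SmallSet (U : ZFSet) (A : Set X) : Prop :=
  ∃ B : ZFSet, B ∈ U ∧ Nonempty (A ≃ B.toSet)

/-- `x < y` in the sense `x ≤ y ∧ x ≠ y`, for an arbitrary relation `le`. -/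
def ltR (le : X → X → Prop) (x y : X) : Prop := le x y ∧ x ≠ y

/-- The lower complement `S^↧ = {x | ∀ y ∈ S, x < y}`. -/
def lowerComp (le : X → X → Prop) (S : Set X) : Set X := {x | ∀ y ∈ S, ltR le x y}

/-- The upper complement `S^↑ = {x | ∀ y ∈ S, y < x}`. -/
def upperComp (le : X → X → Prop) (S : Set X) : Set X := {x | ∀ y ∈ S, ltR le y x}

/-- `b` is the incremented join `⋁⁺S`, i.e. the minimum of `S^↑`. -/
def IsIncJoin (le : X → X → Prop) (S : Set X) (b : X) : Prop :=
  b ∈ upperComp le S ∧ ∀ c ∈ upperComp le S, le b c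

/-- `b = x⁺`, i.e. `b = ⋁⁺{x}`. -/
def IsSuccOf (le : X → X → Prop) (x b : X) : Prop := IsIncJoin le {x} b

/-- `b` is the join (least upper bound) of `S`. -/
def IsJoin (le : X → X → Prop) (S : Set X) (b : X) : Prop :=
  (∀ y ∈ S, le y b) ∧ ∀ c, (∀ y ∈ S, le y c) → le b c

/-- An ordinal system relative to the universe `U`: a partial order satisfying
(O1) lower complements of nonempty subsets lie in `P_𝒰(X)`, and
(O2) every member of `P_𝒰(X)` has an incremented join. -/
def IsOrdinalSystem (U : ZFSet) (le : X → X → Prop) : Prop :=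
  IsPartialOrder X le ∧
  (∀ S : Set X, S.Nonempty → SmallSet U (lowerComp le S)) ∧
  (∀ S : Set X, SmallSet U S → ∃ b, IsIncJoin le S b)

/-- Any singleton subset is small, provided the universe is nonempty and closed
under pairing. -/
lemma smallSet_singleton {O : Type*} (U : ZFSet) (B : ZFSet) (hB : B ∈ U)
    (hpair : ∀ x ∈ U, ∀ y ∈ U, ({x, y} : ZFSet) ∈ U) (x : O) :
    SmallSet U ({x} : Set O) := by
  refine ⟨{B, B}, hpair B hB B hB, ⟨?_⟩⟩
  refine ⟨fun _ => ⟨B, ?_⟩, fun _ => ⟨x, rfl⟩, fun a => Subtype.ext a.2.symm,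
    fun b => Subtype.ext ?_⟩
  · change B ∈ ({B, B} : ZFSet); simp
  · have hb := b.2
    change _ ∈ ({B, B} : ZFSet) at hb
    simp only [ZFSet.mem_insert_iff, ZFSet.mem_singleton, or_self] at hb
    exact hb.symm

theorem stmt_10 {O : Type*} [PartialOrder O] (U : ZFSet) (hU : IsUniverse U) :
    IsOrdinalSystem U ((· ≤ ·) : O → O → Prop) ↔
      ((∀ S : Set O, S.Nonempty → SmallSet U (lowerComp (· ≤ ·) S)) ∧
       (∀ S : Set O, SmallSet U S → ∃ b, IsJoin (· ≤ ·) S b) ∧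
       (∀ x : O, ∃ b, IsSuccOf (· ≤ ·) x b)) := by
  constructor
  · rintro ⟨_, h1, h2⟩
    refine ⟨h1, ?_, ?_⟩
    · -- joins of small sets
      intro S hS
      obtain ⟨b, hb1, hb2⟩ := h2 S hS
      by_cases hmax : ∃ m ∈ S, ∀ x ∈ S, x ≤ m
      · obtain ⟨m, hm, hmub⟩ := hmax
        exact ⟨m, hmub, fun c hc => hc m hm⟩
      · refine ⟨b, fun y hy => (hb1 y hy).1, fun c hc => ?_⟩
        refine hb2 c (fun y hy => ⟨hc y hy, fun he => hmax ⟨c, he ▸ hy, hc⟩⟩)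
    · -- successors
      intro x
      obtain ⟨B, hBU, -⟩ := h1 {x} ⟨x, rfl⟩
      obtain ⟨b, hb⟩ := h2 {x} (smallSet_singleton U B hBU hU.2.1 x)
      exact ⟨b, hb⟩
  · rintro ⟨h1, h2, h3⟩
    refine ⟨inferInstance, h1, ?_⟩
    intro S hS
    obtain ⟨b, hbub, hble⟩ := h2 S hS
    by_cases hbS : b ∈ S
    · obtain ⟨hc1, hc2⟩ := (h3 b).choose_spec
      set c := (h3 b).choose
      have hbc : ltR (· ≤ ·) b c := hc1 b rfl
      refine ⟨c, fun y hy => ?_, fun z hz => ?_⟩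
      · exact ⟨le_trans (hbub y hy) hbc.1,
          fun he => hbc.2 (le_antisymm hbc.1 (he ▸ hbub y hy))⟩
      · exact hc2 z (fun y hy => by
          rw [Set.mem_singleton_iff] at hy; rw [hy]; exact hz b hbS)
    · exact ⟨b, fun y hy => ⟨hbub y hy, fun he => hbS (he ▸ hy)⟩,
        fun z hz => hble z (fun y hy => (hz y hy).1)⟩

end Paper
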